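/- For any finite simple graph G, the second Zagreb index satisfies s(G) = γ₃(G) + 2·γ₂(G) + γ₁(G), where γ_t(G) denotes the number of trails with t edges in G (each trail and its reverse counted once, and trails of length 3 may be closed). -/

import Mathlib

open SimpleGraph Finset

variable {V : Type*}

/-- The `m`-metric (first Zagreb index) of a graph: the sum of the squares of the degrees. -/
noncomputable def mMetric [Fintype V] (G : SimpleGraph V) : ℕ :=
  letI := Classical.decRel G.Adj
  ∑ v : V, (G.degree v) ^ 2

/-- The `s`-metric (second Zagreb index) of a graph: the sum over all edges of the product of
the degrees of the two endpoints. -/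
noncomputable def sMetric [Fintype V] (G : SimpleGraph V) : ℕ :=
  letI := Classical.decRel G.Adj
  ∑ e ∈ G.edgeFinset,
    Sym2.lift ⟨fun u v => G.degree u * G.degree v, fun _ _ => Nat.mul_comm _ _⟩ e

/-- The first SF-dimension: the maximum of the `m`-metric over all spanning trees. -/
noncomputable def tau1 [Fintype V] (G : SimpleGraph V) : ℕ :=
  sSup {k | ∃ T : SimpleGraph V, T ≤ G ∧ T.IsTree ∧ mMetric T = k}

/-- The second SF-dimension: the maximum of the `s`-metric over all spanning trees. -/
noncomputable def tau2 [Fintype V] (G : SimpleGraph V) : ℕ :=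
  sSup {k | ∃ T : SimpleGraph V, T ≤ G ∧ T.IsTree ∧ sMetric T = k}

/-- Number of vertices of a given degree. -/
noncomputable def degCount [Fintype V] (G : SimpleGraph V) (k : ℕ) : ℕ :=
  letI := Classical.decRel G.Adj
  letI := Classical.decEq V
  (Finset.univ.filter fun v => G.degree v = k).card

/-- Number of leaves of a graph. -/
noncomputable def leafCount [Fintype V] (G : SimpleGraph V) : ℕ := degCount G 1

/-- The bundled type of trails of length `t` in `G` (with endpoints quantified over). -/
def TrailBundle (G : SimpleGraph V) (t : ℕ) : Type _ :=
  {p : (u : V) × (v : V) × G.Walk u v // p.2.2.IsTrail ∧ p.2.2.length = t}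

/-- The reverse of a bundled trail. -/
def TrailBundle.rev {G : SimpleGraph V} {t : ℕ} (p : TrailBundle G t) : TrailBundle G t :=
  ⟨⟨p.1.2.1, p.1.1, p.1.2.2.reverse⟩, p.2.1.reverse _ , by simp [p.2.2]⟩

/-- `gamma G t` is the number of trails with `t` edges in `G`, where a trail and its
reverse are counted once (we count equivalence classes of trails under reversal). -/
noncomputable def gamma (G : SimpleGraph V) (t : ℕ) : ℕ :=
  Nat.card (Quot fun p q : TrailBundle G t => q = p.rev)
section Aux
variable {G : SimpleGraph V}

variable {G : SimpleGraph V}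

@[simp] lemma TrailBundle.rev_rev {t : ℕ} (p : TrailBundle G t) : p.rev.rev = p := by
  obtain ⟨⟨u, v, w⟩, h⟩ := p
  simp [TrailBundle.rev]
  rfl

lemma quot_mk_eq_iff {t : ℕ} (p q : TrailBundle G t) :
    Quot.mk (fun a b : TrailBundle G t => b = a.rev) p =
      Quot.mk (fun a b : TrailBundle G t => b = a.rev) q ↔ q = p ∨ q = p.rev := by
  constructor
  · intro h
    have h' := Quot.eq.mp h
    clear h
    induction h' with
    | rel a b hab => exact Or.inr hab
    | refl a => exact Or.inl rfl
    | symm a b _ ih =>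
      rcases ih with rfl | rfl
      · exact Or.inl rfl
      · exact Or.inr (by simp)
    | trans a b c _ _ ih1 ih2 =>
      rcases ih1 with rfl | rfl
      · exact ih2
      · rcases ih2 with rfl | rfl
        · exact Or.inr rfl
        · exact Or.inl (by simp)
  · rintro (rfl | rfl)
    · rfl
    · exact Quot.sound rfl

lemma two_mul_gamma_eq (G : SimpleGraph V) (t : ℕ) [Finite (TrailBundle G t)]
    (hfp : ∀ p : TrailBundle G t, p.rev ≠ p) :
    2 * gamma G t = Nat.card (TrailBundle G t) := by
  classical
  set r : TrailBundle G t → TrailBundle G t → Prop := fun a b => b = a.rev with hr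
  have key : ∀ p q : TrailBundle G t,
      Quot.mk r p = Quot.mk r q ↔ q = p ∨ q = p.rev := fun p q => quot_mk_eq_iff p q
  have e : TrailBundle G t ≃ (Quot r) × Bool :=
    { toFun := fun p => (Quot.mk r p, decide (p = (Quot.mk r p).out))
      invFun := fun c => if c.2 then c.1.out else c.1.out.rev
      left_inv := by
        intro p
        dsimp only
        by_cases h : p = (Quot.mk r p).out
        · rw [decide_eq_true h, if_pos rfl]
          exact h.symm
        · have h2 : p = (Quot.mk r p).out ∨ p = (Quot.mk r p).out.rev :=
            (key _ p).mp (Quot.out_eq (Quot.mk r p))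
          rcases h2 with h2 | h2
          · exact absurd h2 h
          · rw [decide_eq_false h]
            simpa using h2.symm
      right_inv := by
        rintro ⟨c, b⟩
        cases b
        · dsimp only
          rw [if_neg Bool.false_ne_true]
          have hmk : Quot.mk r c.out.rev = c := by
            rw [Quot.sound (show r c.out.rev c.out.rev.rev from rfl)]
            simp only [TrailBundle.rev_rev]
            exact Quot.out_eq c
          rw [Prod.mk.injEq, hmk]
          exact ⟨rfl, decide_eq_false (fun h => hfp c.out h)⟩
        · dsimp only
          rw [if_pos rfl]
          have hmk : Quot.mk r c.out = c := Quot.out_eq c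
          rw [Prod.mk.injEq, hmk]
          exact ⟨rfl, by simp⟩ }
  have hc := Nat.card_congr e
  rw [Nat.card_prod] at hc
  simp only [Nat.card_eq_fintype_card, Fintype.card_bool] at hc
  have : gamma G t = Nat.card (Quot r) := rfl
  omega


section Tup
variable (G : SimpleGraph V)

abbrev C4 (q : (V × V) × V × V) : Prop :=
  G.Adj q.1.2 q.2.1 ∧ G.Adj q.1.1 q.1.2 ∧ G.Adj q.2.1 q.2.2

abbrev T4 := {q : (V × V) × V × V // C4 G q}
abbrev D3 := {q : (V × V) × V × V // C4 G q ∧ q.1.1 ≠ q.2.1 ∧ q.1.2 ≠ q.2.2}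
abbrev D2 := {p : V × V × V // G.Adj p.1 p.2.1 ∧ G.Adj p.2.1 p.2.2 ∧ p.1 ≠ p.2.2}
abbrev D1 := {p : V × V // G.Adj p.1 p.2}

variable {G}

/-- support of a bundled trail -/
def TrailBundle.supp {t : ℕ} (p : TrailBundle G t) : List V := p.1.2.2.support

def F1 : D1 G → TrailBundle G 1 := fun ⟨⟨a, b⟩, h⟩ =>
  ⟨⟨a, b, .cons h .nil⟩, by simp [Walk.isTrail_def], rfl⟩

def F2 : D2 G → TrailBundle G 2 := fun ⟨⟨x, v, y⟩, hxv, hvy, hxy⟩ =>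
  ⟨⟨x, y, .cons hxv (.cons hvy .nil)⟩, by
    have hne : ¬ (s(x, v) = s(v, y)) := by
      rw [Sym2.eq_iff]
      rintro (⟨rfl, rfl⟩ | ⟨rfl, -⟩)
      · exact G.irrefl hxv
      · exact hxy rfl
    simp [Walk.isTrail_def, hne], rfl⟩

def F3 : D3 G → TrailBundle G 3 := fun ⟨⟨⟨x, u⟩, v, y⟩, ⟨huv, hxu, hvy⟩, hxv, huy⟩ =>
  ⟨⟨x, y, .cons hxu (.cons huv (.cons hvy .nil))⟩, by
    have h12 : ¬ (s(x, u) = s(u, v)) := by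
      rw [Sym2.eq_iff]
      rintro (⟨rfl, rfl⟩ | ⟨rfl, -⟩)
      · exact G.irrefl huv
      · exact hxv rfl
    have h13 : ¬ (s(x, u) = s(v, y)) := by
      rw [Sym2.eq_iff]
      rintro (⟨rfl, rfl⟩ | ⟨rfl, rfl⟩)
      · exact hxv rfl
      · exact G.irrefl huv
    have h23 : ¬ (s(u, v) = s(v, y)) := by
      rw [Sym2.eq_iff]
      rintro (⟨rfl, rfl⟩ | ⟨rfl, -⟩)
      · exact G.irrefl huv
      · exact huy rfl
    simp [Walk.isTrail_def, h12, h13, h23], rfl⟩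

lemma F1_bij : Function.Bijective (F1 (G := G)) := by
  constructor
  · rintro ⟨⟨a, b⟩, h⟩ ⟨⟨a', b'⟩, h'⟩ hF
    have := congrArg TrailBundle.supp hF
    simp only [TrailBundle.supp, F1, Walk.support_cons, Walk.support_nil,
      List.cons.injEq, and_true] at this
    obtain ⟨rfl, rfl⟩ := this
    rfl
  · rintro ⟨⟨u, v, w⟩, ht, hl⟩
    cases w with
    | nil => simp at hl
    | cons h w' =>
      cases w' with
      | nil => exact ⟨⟨(u, v), h⟩, rfl⟩
      | cons h' w'' => simp [Walk.length_cons] at hl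

lemma F2_bij : Function.Bijective (F2 (G := G)) := by
  constructor
  · rintro ⟨⟨x, v, y⟩, a1, a2, a3⟩ ⟨⟨x', v', y'⟩, b1, b2, b3⟩ hF
    have := congrArg TrailBundle.supp hF
    simp only [TrailBundle.supp, F2, Walk.support_cons, Walk.support_nil,
      List.cons.injEq, and_true] at this
    obtain ⟨rfl, rfl, rfl⟩ := this
    rfl
  · rintro ⟨⟨u, v, w⟩, ht, hl⟩
    cases w with
    | nil => simp at hl
    | cons h w' =>
      cases w' with
      | nil => simp at hl
      | cons h' w'' =>
        cases w'' with
        | nil =>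
          refine ⟨⟨(u, _, v), h, h', ?_⟩, rfl⟩
          dsimp only
          rintro rfl
          have := ht.edges_nodup
          simp [Sym2.eq_swap] at this
        | cons h'' w3 => simp [Walk.length_cons] at hl

lemma F3_bij : Function.Bijective (F3 (G := G)) := by
  constructor
  · rintro ⟨⟨⟨x, u⟩, v, y⟩, ⟨a1, a2, a3⟩, a4, a5⟩ ⟨⟨⟨x', u'⟩, v', y'⟩, ⟨b1, b2, b3⟩, b4, b5⟩ hF
    have := congrArg TrailBundle.supp hF
    simp only [TrailBundle.supp, F3, Walk.support_cons, Walk.support_nil,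
      List.cons.injEq, and_true] at this
    obtain ⟨rfl, rfl, rfl, rfl⟩ := this
    rfl
  · rintro ⟨⟨u, v, w⟩, ht, hl⟩
    cases w with
    | nil => simp at hl
    | cons h1 w1 =>
      cases w1 with
      | nil => simp at hl
      | cons h2 w2 =>
        cases w2 with
        | nil => simp at hl
        | cons h3 w3 =>
          cases w3 with
          | nil =>
            refine ⟨⟨((u, _), _, v), ⟨h2, h1, h3⟩, ?_, ?_⟩, rfl⟩
            · dsimp only
              rintro rfl
              have := ht.edges_nodup
              simp [Sym2.eq_swap] at this
            · dsimp only
              rintro rfl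
              have := ht.edges_nodup
              simp [Sym2.eq_swap] at this
          | cons h4 w4 => simp [Walk.length_cons] at hl


variable {G : SimpleGraph V}

def T4Equiv (G : SimpleGraph V) :
    ((d : G.Dart) × (↥(G.neighborSet d.toProd.1) × ↥(G.neighborSet d.toProd.2))) ≃ T4 G where
  toFun := fun ⟨d, x, y⟩ => ⟨((x.1, d.toProd.1), d.toProd.2, y.1), d.adj, x.2.symm, y.2⟩
  invFun := fun ⟨q, h⟩ => ⟨⟨(q.1.2, q.2.1), h.1⟩, ⟨q.1.1, h.2.1.symm⟩, ⟨q.2.2, h.2.2⟩⟩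
  left_inv := by rintro ⟨⟨⟨u, v⟩, hd⟩, ⟨x, hx⟩, ⟨y, hy⟩⟩; rfl
  right_inv := by rintro ⟨⟨⟨x, u⟩, v, y⟩, h⟩; rfl

lemma card_T4 [Fintype V] (G : SimpleGraph V) : Nat.card (T4 G) = 2 * sMetric G := by
  letI := Classical.decRel G.Adj
  letI := Classical.decEq V
  rw [← Nat.card_congr (T4Equiv G)]
  rw [Nat.card_eq_fintype_card, Fintype.card_sigma]
  simp only [Fintype.card_prod, card_neighborSet_eq_degree]
  have hlift : ∀ d : G.Dart, G.degree d.toProd.1 * G.degree d.toProd.2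
      = Sym2.lift ⟨fun u v => G.degree u * G.degree v, fun _ _ => Nat.mul_comm _ _⟩ d.edge := by
    rintro ⟨⟨u, v⟩, h⟩; rfl
  rw [Finset.sum_congr rfl (fun d _ => hlift d)]
  rw [← Finset.sum_fiberwise_of_maps_to
    (g := Dart.edge) (t := G.edgeFinset) (fun d _ => (mem_edgeFinset).mpr d.edge_mem)]
  have hin : ∀ e ∈ G.edgeFinset,
      (∑ d ∈ univ.filter (fun d : G.Dart => d.edge = e),
        Sym2.lift ⟨fun u v => G.degree u * G.degree v, fun _ _ => Nat.mul_comm _ _⟩ d.edge)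
      = 2 * Sym2.lift ⟨fun u v => G.degree u * G.degree v, fun _ _ => Nat.mul_comm _ _⟩ e := by
    intro e he
    rw [Finset.sum_congr rfl (fun d hd => by rw [(Finset.mem_filter.mp hd).2])]
    rw [Finset.sum_const, G.dart_edge_fiber_card e (mem_edgeFinset.mp he), smul_eq_mul]
  rw [Finset.sum_congr rfl hin, ← Finset.mul_sum]
  rfl

lemma nat_card_subtype_split {α : Type*} [Fintype α] (c p : α → Prop) :
    Nat.card {x // c x} = Nat.card {x // c x ∧ p x} + Nat.card {x // c x ∧ ¬ p x} := by
  classical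
  simp only [Nat.card_eq_fintype_card, Fintype.card_subtype]
  rw [← Finset.card_filter_add_card_filter_not (s := univ.filter c) (p := p)]
  congr 1 <;> (rw [Finset.filter_filter])

def ePnQ (G : SimpleGraph V) :
    {q : (V × V) × V × V // (C4 G q ∧ q.1.1 ≠ q.2.1) ∧ ¬ q.1.2 ≠ q.2.2} ≃ D2 G where
  toFun := fun ⟨q, h⟩ => ⟨(q.1.1, q.1.2, q.2.1), h.1.1.2.1, h.1.1.1, h.1.2⟩
  invFun := fun ⟨p, h⟩ =>
    ⟨((p.1, p.2.1), p.2.2, p.2.1), ⟨⟨h.2.1, h.1, h.2.1.symm⟩, h.2.2⟩, not_ne_iff.mpr rfl⟩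
  left_inv := by
    rintro ⟨⟨⟨x, u⟩, v, y⟩, ⟨hc, hp⟩, hq⟩
    have : u = y := not_ne_iff.mp hq
    subst this
    rfl
  right_inv := by rintro ⟨⟨x, u, v⟩, h⟩; rfl

def enPQ (G : SimpleGraph V) :
    {q : (V × V) × V × V // (C4 G q ∧ ¬ q.1.1 ≠ q.2.1) ∧ q.1.2 ≠ q.2.2} ≃ D2 G where
  toFun := fun ⟨q, h⟩ => ⟨(q.1.2, q.2.1, q.2.2), h.1.1.1, h.1.1.2.2, h.2⟩
  invFun := fun ⟨p, h⟩ =>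
    ⟨((p.2.1, p.1), p.2.1, p.2.2), ⟨⟨h.1, h.1.symm, h.2.1⟩, not_ne_iff.mpr rfl⟩, h.2.2⟩
  left_inv := by
    rintro ⟨⟨⟨x, u⟩, v, y⟩, ⟨hc, hp⟩, hq⟩
    have : x = v := not_ne_iff.mp hp
    subst this
    rfl
  right_inv := by rintro ⟨⟨u, v, y⟩, h⟩; rfl

def enPnQ (G : SimpleGraph V) :
    {q : (V × V) × V × V // (C4 G q ∧ ¬ q.1.1 ≠ q.2.1) ∧ ¬ q.1.2 ≠ q.2.2} ≃ D1 G where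
  toFun := fun ⟨q, h⟩ => ⟨(q.1.2, q.2.1), h.1.1.1⟩
  invFun := fun ⟨p, h⟩ =>
    ⟨((p.2, p.1), p.2, p.1), ⟨⟨h, h.symm, h.symm⟩, not_ne_iff.mpr rfl⟩, not_ne_iff.mpr rfl⟩
  left_inv := by
    rintro ⟨⟨⟨x, u⟩, v, y⟩, ⟨hc, hp⟩, hq⟩
    have h1 : x = v := not_ne_iff.mp hp
    have h2 : u = y := not_ne_iff.mp hq
    subst h1; subst h2
    rfl
  right_inv := by rintro ⟨⟨u, v⟩, h⟩; rfl

def ePQ (G : SimpleGraph V) :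
    {q : (V × V) × V × V // (C4 G q ∧ q.1.1 ≠ q.2.1) ∧ q.1.2 ≠ q.2.2} ≃ D3 G :=
  Equiv.subtypeEquivRight (fun q => by tauto)

lemma card_T4_split [Fintype V] (G : SimpleGraph V) :
    Nat.card (T4 G) =
      Nat.card (D3 G) + Nat.card (D2 G) + Nat.card (D2 G) + Nat.card (D1 G) := by
  classical
  rw [nat_card_subtype_split (C4 G) (fun q => q.1.1 ≠ q.2.1)]
  rw [nat_card_subtype_split (fun q => C4 G q ∧ q.1.1 ≠ q.2.1) (fun q => q.1.2 ≠ q.2.2)]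
  rw [nat_card_subtype_split (fun q => C4 G q ∧ ¬ q.1.1 ≠ q.2.1) (fun q => q.1.2 ≠ q.2.2)]
  rw [Nat.card_congr (ePQ G), Nat.card_congr (ePnQ G), Nat.card_congr (enPQ G),
    Nat.card_congr (enPnQ G)]
  ring


lemma hfp1 : ∀ p : TrailBundle G 1, p.rev ≠ p := by
  intro p h
  obtain ⟨⟨⟨a, b⟩, hab⟩, rfl⟩ := F1_bij.2 p
  have hs := congrArg TrailBundle.supp h
  simp only [TrailBundle.supp, TrailBundle.rev, F1, Walk.support_reverse, Walk.support_cons,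
    Walk.support_nil, List.reverse_cons, List.reverse_nil, List.nil_append, List.cons_append,
    List.cons.injEq, and_true] at hs
  obtain ⟨rfl, -⟩ := hs
  exact G.irrefl hab

lemma hfp2 : ∀ p : TrailBundle G 2, p.rev ≠ p := by
  intro p h
  obtain ⟨⟨⟨x, v, y⟩, hxv, hvy, hxy⟩, rfl⟩ := F2_bij.2 p
  have hs := congrArg TrailBundle.supp h
  simp only [TrailBundle.supp, TrailBundle.rev, F2, Walk.support_reverse, Walk.support_cons,
    Walk.support_nil, List.reverse_cons, List.reverse_nil, List.nil_append, List.cons_append,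
    List.cons.injEq, and_true] at hs
  exact hxy hs.1.symm

lemma hfp3 : ∀ p : TrailBundle G 3, p.rev ≠ p := by
  intro p h
  obtain ⟨⟨⟨⟨x, u⟩, v, y⟩, ⟨huv, hxu, hvy⟩, hxv, huy⟩, rfl⟩ := F3_bij.2 p
  have hs := congrArg TrailBundle.supp h
  simp only [TrailBundle.supp, TrailBundle.rev, F3, Walk.support_reverse, Walk.support_cons,
    Walk.support_nil, List.reverse_cons, List.reverse_nil, List.nil_append, List.cons_append,
    List.cons.injEq, and_true] at hs
  obtain ⟨-, rfl, -⟩ := hs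
  exact G.irrefl huv

end Tup

/-- For any finite simple graph `G`, the second Zagreb index satisfies
`s(G) = γ₃(G) + 2·γ₂(G) + γ₁(G)`. -/
theorem sMetric_eq_gamma_three_add_two_gamma_two_add_gamma_one [Fintype V]
    (G : SimpleGraph V) :
    sMetric G = gamma G 3 + 2 * gamma G 2 + gamma G 1 := by
  haveI : Finite (TrailBundle G 1) := Finite.of_surjective _ F1_bij.surjective
  haveI : Finite (TrailBundle G 2) := Finite.of_surjective _ F2_bij.surjective
  haveI : Finite (TrailBundle G 3) := Finite.of_surjective _ F3_bij.surjective
  have h1 : 2 * gamma G 1 = Nat.card (D1 G) :=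
    (two_mul_gamma_eq G 1 hfp1).trans (Nat.card_eq_of_bijective F1 F1_bij).symm
  have h2 : 2 * gamma G 2 = Nat.card (D2 G) :=
    (two_mul_gamma_eq G 2 hfp2).trans (Nat.card_eq_of_bijective F2 F2_bij).symm
  have h3 : 2 * gamma G 3 = Nat.card (D3 G) :=
    (two_mul_gamma_eq G 3 hfp3).trans (Nat.card_eq_of_bijective F3 F3_bij).symm
  have hsplit := card_T4_split G
  have hT4 := card_T4 G
  omega
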